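/- For n points in general position in ℝ^k (n > k ≥ 2) and a fixed bounded set B of displaced points, the set of shear parameters γ for which the sheared data set fails to be in general position is finite: if X'_γ = S ∪ A ∪ g_γ(B) where S ∪ A ∪ B is in general position, then X'_γ is in general position for all but finitely many γ ∈ ℝ. -/

import Mathlib

attribute [local instance] Classical.propDecidable

/-- A finite set in ℝ^k is in general position if no affine hyperplane
contains more than k of its points. -/
def InGeneralPosition {k : ℕ} (X : Finset (EuclideanSpace ℝ (Fin k))) : Prop :=
  ∀ (u : EuclideanSpace ℝ (Fin k)) (c : ℝ), u ≠ 0 →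
    (X.filter fun x => (inner ℝ u x : ℝ) = c).card ≤ k

/-- The shear transform g_γ relative to an orthonormal basis e_1,...,e_k:
g_γ(e_1) = e_1 + γ e_2 and g_γ(e_j) = e_j for j ≥ 2. -/
noncomputable def shear {k : ℕ} (hk : 2 ≤ k)
    (b : OrthonormalBasis (Fin k) ℝ (EuclideanSpace ℝ (Fin k))) (γ : ℝ) :
    EuclideanSpace ℝ (Fin k) →ₗ[ℝ] EuclideanSpace ℝ (Fin k) :=
  b.toBasis.constr ℝ fun j =>
    if j = (⟨0, by omega⟩ : Fin k) then b ⟨0, by omega⟩ + γ • b ⟨1, by omega⟩ else b j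

section Aux
open Polynomial
variable {k : ℕ} (hk : 2 ≤ k) (b : OrthonormalBasis (Fin k) ℝ (EuclideanSpace ℝ (Fin k)))

lemma shear_apply (γ : ℝ) (x : EuclideanSpace ℝ (Fin k)) :
    shear hk b γ x = x + (γ * (inner ℝ (b ⟨0, by omega⟩) x : ℝ)) • b ⟨1, by omega⟩ := by
  have key : shear hk b γ = LinearMap.id +
      γ • ((LinearMap.toSpanSingleton ℝ _ (b ⟨1, by omega⟩)).comp
        (innerSL ℝ (b ⟨0, by omega⟩)).toLinearMap) := by
    apply b.toBasis.ext
    intro i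
    rw [shear, b.toBasis.constr_basis]
    simp only [OrthonormalBasis.coe_toBasis, LinearMap.add_apply,
      LinearMap.id_apply, LinearMap.smul_apply, LinearMap.comp_apply,
      ContinuousLinearMap.coe_coe, innerSL_apply_apply, LinearMap.toSpanSingleton_apply,
      orthonormal_iff_ite.mp b.orthonormal]
    by_cases h : i = (⟨0, by omega⟩ : Fin k)
    · subst h
      rw [if_pos rfl, if_pos rfl]
      simp
    · rw [if_neg h, if_neg (fun hh => h hh.symm)]
      simp
  rw [key]
  simp only [LinearMap.add_apply, LinearMap.id_apply, LinearMap.smul_apply,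
    LinearMap.comp_apply, ContinuousLinearMap.coe_coe, innerSL_apply_apply,
    LinearMap.toSpanSingleton_apply]
  rw [smul_smul]

lemma shear_zero (x : EuclideanSpace ℝ (Fin k)) : shear hk b 0 x = x := by
  rw [shear_apply]; simp

lemma inner_basis_sum (w : Fin k → ℝ) (j : Fin k) :
    (inner ℝ (b j) (∑ j' : Fin k, w j' • b j') : ℝ) = w j := by
  rw [inner_sum]
  simp_rw [real_inner_smul_right, orthonormal_iff_ite.mp b.orthonormal]
  simp

/-- Position of a point after the shear is applied to the points of `Bs`. -/
noncomputable def pt (Bs : Finset (EuclideanSpace ℝ (Fin k))) (γ : ℝ)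
    (x : EuclideanSpace ℝ (Fin k)) : EuclideanSpace ℝ (Fin k) :=
  if x ∈ Bs then shear hk b γ x else x

/-- Matrix whose row `i` is `(1, coords of y i)`. -/
noncomputable def rowMat (y : Fin (k + 1) → EuclideanSpace ℝ (Fin k)) :
    Matrix (Fin (k + 1)) (Fin (k + 1)) ℝ :=
  Matrix.of fun i => Fin.cons 1 fun j : Fin k => (inner ℝ (b j) (y i) : ℝ)

lemma det_eq_zero_iff_hyperplane (y : Fin (k + 1) → EuclideanSpace ℝ (Fin k)) :
    (rowMat b y).det = 0 ↔
      ∃ u : EuclideanSpace ℝ (Fin k), u ≠ 0 ∧ ∃ c : ℝ, ∀ i, (inner ℝ u (y i) : ℝ) = c := by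
  rw [← Matrix.exists_mulVec_eq_zero_iff]
  constructor
  · rintro ⟨v, hv, hMv⟩
    refine ⟨∑ j : Fin k, v j.succ • b j, ?_, -(v 0), fun i => ?_⟩
    · intro hu
      apply hv
      have hcoef : ∀ j : Fin k, v j.succ = 0 := by
        intro j
        rw [← inner_basis_sum b (fun j' => v j'.succ) j, hu, inner_zero_right]
      have hrow := congr_fun hMv 0
      rw [Matrix.mulVec, dotProduct] at hrow
      simp only [rowMat, Matrix.of_apply, Fin.sum_univ_succ, Fin.cons_zero, Fin.cons_succ,
        one_mul, hcoef, mul_zero, Finset.sum_const_zero, add_zero, Pi.zero_apply] at hrow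
      funext j
      refine Fin.cases ?_ (fun j' => ?_) j
      · exact hrow
      · exact hcoef j'
    · have hrow := congr_fun hMv i
      rw [Matrix.mulVec, dotProduct] at hrow
      simp only [rowMat, Matrix.of_apply, Fin.sum_univ_succ, Fin.cons_zero, Fin.cons_succ,
        one_mul, Pi.zero_apply] at hrow
      rw [sum_inner]
      simp only [real_inner_smul_left]
      linarith [hrow, Finset.sum_congr rfl
        (fun (j : Fin k) (_ : j ∈ Finset.univ) =>
          mul_comm ((inner ℝ (b j) (y i)) : ℝ) (v j.succ))]
  · rintro ⟨u, hu, c, hc⟩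
    refine ⟨Fin.cons (-c) (fun j : Fin k => (inner ℝ (b j) u : ℝ)), ?_, ?_⟩
    · intro hv
      apply hu
      have hz : ∀ j : Fin k, (inner ℝ (b j) u : ℝ) = 0 := by
        intro j
        have := congr_fun hv j.succ
        simpa using this
      have : u = ∑ j : Fin k, (inner ℝ (b j) u : ℝ) • b j := (b.sum_repr' u).symm
      rw [this]
      simp [hz]
    · funext i
      rw [Matrix.mulVec, dotProduct]
      simp only [rowMat, Matrix.of_apply, Fin.sum_univ_succ, Fin.cons_zero, Fin.cons_succ, one_mul]
      have : ∑ j : Fin k, (inner ℝ (b j) (y i) : ℝ) * (inner ℝ (b j) u : ℝ)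
          = (inner ℝ u (y i) : ℝ) := by
        rw [← b.sum_inner_mul_inner u (y i)]
        exact Finset.sum_congr rfl fun j _ => by rw [real_inner_comm u (b j)]; ring
      rw [this, hc i, Pi.zero_apply]
      ring

/-- Polynomial (in the shear parameter) version of `rowMat`. -/
noncomputable def polyMat (Bs : Finset (EuclideanSpace ℝ (Fin k)))
    (g : Fin (k + 1) → EuclideanSpace ℝ (Fin k)) :
    Matrix (Fin (k + 1)) (Fin (k + 1)) ℝ[X] :=
  Matrix.of fun i => Fin.cons 1 fun j : Fin k =>
    C (inner ℝ (b j) (g i) : ℝ) +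
      C (if g i ∈ Bs then (inner ℝ (b ⟨0, by omega⟩) (g i) : ℝ) * (inner ℝ (b j) (b ⟨1, by omega⟩) : ℝ)
        else 0) * X

lemma polyMat_eval (Bs : Finset (EuclideanSpace ℝ (Fin k)))
    (g : Fin (k + 1) → EuclideanSpace ℝ (Fin k)) (γ : ℝ) :
    (polyMat hk b Bs g).map (evalRingHom γ) = rowMat b (fun i => pt hk b Bs γ (g i)) := by
  funext i j
  refine Fin.cases ?_ (fun j' => ?_) j <;>
    simp only [Matrix.map_apply, polyMat, rowMat, Matrix.of_apply, Fin.cons_zero, Fin.cons_succ,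
      coe_evalRingHom, eval_C, eval_X, eval_one, eval_add, eval_mul]
  unfold pt
  by_cases h : g i ∈ Bs
  · rw [if_pos h, if_pos h, shear_apply hk b, inner_add_right, real_inner_smul_right]
    ring
  · rw [if_neg h, if_neg h]
    ring

lemma eval_detPoly (Bs : Finset (EuclideanSpace ℝ (Fin k)))
    (g : Fin (k + 1) → EuclideanSpace ℝ (Fin k)) (γ : ℝ) :
    (polyMat hk b Bs g).det.eval γ = (rowMat b (fun i => pt hk b Bs γ (g i))).det := by
  have := RingHom.map_det (evalRingHom γ) (polyMat hk b Bs g)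
  rw [RingHom.mapMatrix_apply] at this
  rw [← polyMat_eval hk b Bs g γ, ← this, coe_evalRingHom]

end Aux

theorem sheared_general_position_cofinite {k n : ℕ} (hk : 2 ≤ k) (hkn : k < n)
    (b : OrthonormalBasis (Fin k) ℝ (EuclideanSpace ℝ (Fin k)))
    (S A B : Finset (EuclideanSpace ℝ (Fin k)))
    (hSA : Disjoint S A) (hSB : Disjoint S B) (hAB : Disjoint A B)
    (hcard : (S ∪ A ∪ B).card = n) (hGP : InGeneralPosition (S ∪ A ∪ B))
    (hS : ∀ x ∈ S, (inner ℝ (b ⟨0, by omega⟩) x : ℝ) = 0) :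
    {γ : ℝ | ¬ InGeneralPosition (S ∪ A ∪ B.image (shear hk b γ))}.Finite := by
  classical
  have hGfin : {g : Fin (k + 1) → EuclideanSpace ℝ (Fin k) |
      Function.Injective g ∧ ∀ i, g i ∈ S ∪ A ∪ B}.Finite := by
    apply Set.Finite.subset (Set.Finite.pi fun _ : Fin (k + 1) => (S ∪ A ∪ B).finite_toSet)
    intro g hg
    simp only [Set.mem_pi, Set.mem_univ, forall_true_left]
    exact fun i => hg.2 i
  -- each tuple gives a nonzero polynomial
  have hnz : ∀ g : Fin (k + 1) → EuclideanSpace ℝ (Fin k),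
      Function.Injective g → (∀ i, g i ∈ S ∪ A ∪ B) → (polyMat hk b B g).det ≠ 0 := by
    intro g hginj hgX hzero
    have h0 : (polyMat hk b B g).det.eval 0 = 0 := by rw [hzero]; simp
    rw [eval_detPoly] at h0
    have hpt : (fun i => pt hk b B 0 (g i)) = g := by
      funext i
      unfold pt
      split <;> simp [shear_zero]
    rw [hpt] at h0
    obtain ⟨u, hu, c, hc⟩ := (det_eq_zero_iff_hyperplane b g).mp h0
    have hsub : Finset.univ.image g ⊆ (S ∪ A ∪ B).filter fun x => (inner ℝ u x : ℝ) = c := by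
      intro x hx
      obtain ⟨i, _, rfl⟩ := Finset.mem_image.mp hx
      exact Finset.mem_filter.mpr ⟨hgX i, hc i⟩
    have hcard' : (Finset.univ.image g).card = k + 1 := by
      rw [Finset.card_image_of_injective _ hginj, Finset.card_univ, Fintype.card_fin]
    have h1 := Finset.card_le_card hsub
    rw [hcard'] at h1
    have h2 := hGP u c hu
    omega
  -- the bad set is contained in the union of root sets
  apply Set.Finite.subset (Set.Finite.biUnion hGfin
    (fun g hg => Polynomial.finite_setOf_isRoot (hnz g hg.1 hg.2)))
  intro γ hγ
  simp only [Set.mem_setOf_eq, InGeneralPosition] at hγ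
  push_neg at hγ
  obtain ⟨u, c, hu, hcard2⟩ := hγ
  obtain ⟨T, hTF, hTcard⟩ := Finset.exists_subset_card_eq
    (show k + 1 ≤ ((S ∪ A ∪ B.image (shear hk b γ)).filter
      fun x => (inner ℝ u x : ℝ) = c).card by omega)
  have eT : (T : Finset (EuclideanSpace ℝ (Fin k))) ≃ Fin (k + 1) :=
    Fintype.equivFinOfCardEq (by rw [Fintype.card_coe, hTcard])
  have hyinj : Function.Injective (fun i => (eT.symm i : EuclideanSpace ℝ (Fin k))) :=
    fun i j h => eT.symm.injective (Subtype.coe_injective h)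
  have hyF : ∀ i, (eT.symm i : EuclideanSpace ℝ (Fin k)) ∈
      (S ∪ A ∪ B.image (shear hk b γ)).filter fun x => (inner ℝ u x : ℝ) = c :=
    fun i => hTF (eT.symm i).2
  have hyhyp : ∀ i, (inner ℝ u ((eT.symm i : EuclideanSpace ℝ (Fin k))) : ℝ) = c :=
    fun i => (Finset.mem_filter.mp (hyF i)).2
  have hex : ∀ i, ∃ z, z ∈ S ∪ A ∪ B ∧
      pt hk b B γ z = (eT.symm i : EuclideanSpace ℝ (Fin k)) := by
    intro i
    have hmem := (Finset.mem_filter.mp (hyF i)).1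
    rcases Finset.mem_union.mp hmem with hy1 | hy2
    · refine ⟨_, Finset.mem_union_left _ hy1, ?_⟩
      unfold pt
      rw [if_neg]
      rcases Finset.mem_union.mp hy1 with h | h
      · exact fun hb => (Finset.disjoint_left.mp hSB) h hb
      · exact fun hb => (Finset.disjoint_left.mp hAB) h hb
    · obtain ⟨z, hz, hzeq⟩ := Finset.mem_image.mp hy2
      refine ⟨z, Finset.mem_union_right _ hz, ?_⟩
      unfold pt
      rw [if_pos hz, hzeq]
  have hgX : ∀ i, (hex i).choose ∈ S ∪ A ∪ B := fun i => (hex i).choose_spec.1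
  have hgpt : ∀ i, pt hk b B γ ((hex i).choose) = (eT.symm i : EuclideanSpace ℝ (Fin k)) :=
    fun i => (hex i).choose_spec.2
  have hginj : Function.Injective (fun i => (hex i).choose) := by
    intro i j h
    apply hyinj
    show (eT.symm i : EuclideanSpace ℝ (Fin k)) = (eT.symm j : EuclideanSpace ℝ (Fin k))
    rw [← hgpt i, ← hgpt j]
    exact congrArg (pt hk b B γ) h
  refine Set.mem_biUnion (show (fun i => (hex i).choose) ∈ _ from ⟨hginj, hgX⟩) ?_
  show (polyMat hk b B fun i => (hex i).choose).det.IsRoot γ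
  rw [Polynomial.IsRoot, eval_detPoly]
  apply (det_eq_zero_iff_hyperplane b _).mpr
  refine ⟨u, hu, c, fun i => ?_⟩
  rw [hgpt i]
  exact hyhyp i
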